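/- Let T be a finite semigroup, G a finite group, and β : T → G a surjective semigroup homomorphism. Then there is a subgroup H of T (a subsemigroup of T that is a group) such that β(H) = G. -/
import Mathlib


/-- For a surjective semigroup homomorphism β from a finite semigroup T onto a finite
group G, there is a subgroup H of T (a subsemigroup that is a group under the induced
multiplication) with β(H) = G. -/
theorem surjective_onto_group_restricts_to_subgroup
    {T : Type*} [Semigroup T] [Fintype T]
    {G : Type*} [Group G] [Fintype G]
    (β : T → G) (hmul : ∀ s t : T, β (s * t) = β s * β t)
    (hsurj : Function.Surjective β) :
    ∃ H : Set T,
      (∀ a ∈ H, ∀ b ∈ H, a * b ∈ H) ∧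
      (∃ e ∈ H, (∀ a ∈ H, e * a = a ∧ a * e = a) ∧
        (∀ a ∈ H, ∃ b ∈ H, a * b = e ∧ b * a = e)) ∧
      β '' H = Set.univ := by
  classical
  set P : Finset T → Prop :=
    fun S => (∀ a ∈ S, ∀ b ∈ S, a * b ∈ S) ∧ ∀ g : G, ∃ t ∈ S, β t = g with hPdef
  have hPuniv : P Finset.univ := by
    refine ⟨fun a _ b _ => Finset.mem_univ _, fun g => ?_⟩
    obtain ⟨t, ht⟩ := hsurj g
    exact ⟨t, Finset.mem_univ _, ht⟩
  obtain ⟨S, hSmem, hmin⟩ := Finset.exists_min_image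
    (Finset.univ.filter P) Finset.card
    ⟨Finset.univ, Finset.mem_filter.mpr ⟨Finset.mem_univ _, hPuniv⟩⟩
  have hSP : P S := (Finset.mem_filter.mp hSmem).2
  obtain ⟨hclosed, honto⟩ := hSP
  have hmin' : ∀ S' : Finset T, P S' → S.card ≤ S'.card := by
    intro S' hS'
    exact hmin S' (Finset.mem_filter.mpr ⟨Finset.mem_univ _, hS'⟩)
  -- left translation by s ∈ S is onto S
  have hleft : ∀ s ∈ S, S.image (fun a => s * a) = S := by
    intro s hs
    have hsub : S.image (fun a => s * a) ⊆ S := by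
      intro x hx
      obtain ⟨a, ha, rfl⟩ := Finset.mem_image.mp hx
      exact hclosed s hs a ha
    have hP' : P (S.image (fun a => s * a)) := by
      constructor
      · intro x hx y hy
        obtain ⟨a, ha, rfl⟩ := Finset.mem_image.mp hx
        obtain ⟨b, hb, rfl⟩ := Finset.mem_image.mp hy
        refine Finset.mem_image.mpr ⟨a * (s * b), hclosed a ha _ (hclosed s hs b hb), ?_⟩
        simp [mul_assoc]
      · intro g
        obtain ⟨t, ht, hβt⟩ := honto ((β s)⁻¹ * g)
        refine ⟨s * t, Finset.mem_image.mpr ⟨t, ht, rfl⟩, ?_⟩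
        rw [hmul, hβt, mul_inv_cancel_left]
    exact Finset.eq_of_subset_of_card_le hsub (hmin' _ hP')
  have hright : ∀ s ∈ S, S.image (fun a => a * s) = S := by
    intro s hs
    have hsub : S.image (fun a => a * s) ⊆ S := by
      intro x hx
      obtain ⟨a, ha, rfl⟩ := Finset.mem_image.mp hx
      exact hclosed a ha s hs
    have hP' : P (S.image (fun a => a * s)) := by
      constructor
      · intro x hx y hy
        obtain ⟨a, ha, rfl⟩ := Finset.mem_image.mp hx
        obtain ⟨b, hb, rfl⟩ := Finset.mem_image.mp hy
        refine Finset.mem_image.mpr ⟨a * s * b, hclosed _ (hclosed a ha s hs) b hb, ?_⟩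
        simp [mul_assoc]
      · intro g
        obtain ⟨t, ht, hβt⟩ := honto (g * (β s)⁻¹)
        refine ⟨t * s, Finset.mem_image.mpr ⟨t, ht, rfl⟩, ?_⟩
        rw [hmul, hβt, inv_mul_cancel_right]
    exact Finset.eq_of_subset_of_card_le hsub (hmin' _ hP')
  -- pick s ∈ S
  obtain ⟨s, hs, -⟩ := honto 1
  -- right identity e
  have : s ∈ S.image (fun a => s * a) := (hleft s hs).symm ▸ hs
  obtain ⟨e, he, hse⟩ := Finset.mem_image.mp this
  have he_right : ∀ t ∈ S, t * e = t := by
    intro t ht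
    have : t ∈ S.image (fun a => a * s) := (hright s hs).symm ▸ ht
    obtain ⟨u, hu, rfl⟩ := Finset.mem_image.mp this
    rw [mul_assoc, hse]
  -- left identity f
  have : s ∈ S.image (fun a => a * s) := (hright s hs).symm ▸ hs
  obtain ⟨f, hf, hfs⟩ := Finset.mem_image.mp this
  have hf_left : ∀ t ∈ S, f * t = t := by
    intro t ht
    have : t ∈ S.image (fun a => s * a) := (hleft s hs).symm ▸ ht
    obtain ⟨v, hv, rfl⟩ := Finset.mem_image.mp this
    rw [← mul_assoc, hfs]
  have hef : e = f := by
    have h1 := hf_left e he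
    have h2 := he_right f hf
    rw [← h1, h2]
  have he_left : ∀ t ∈ S, e * t = t := by
    intro t ht; rw [hef]; exact hf_left t ht
  refine ⟨↑S, ?_, ⟨e, he, fun a ha => ⟨he_left a ha, he_right a ha⟩, ?_⟩, ?_⟩
  · intro a ha b hb; exact hclosed a ha b hb
  · intro a ha
    have h1 : e ∈ S.image (fun x => a * x) := (hleft a ha).symm ▸ he
    obtain ⟨b, hb, hab⟩ := Finset.mem_image.mp h1
    have h2 : e ∈ S.image (fun x => x * a) := (hright a ha).symm ▸ he
    obtain ⟨c, hc, hca⟩ := Finset.mem_image.mp h2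
    have hbc : b = c := by
      have : c * (a * b) = c * e := by rw [hab]
      rw [← mul_assoc, hca, he_left b hb, he_right c hc] at this
      exact this
    exact ⟨b, hb, hab, hbc ▸ hca⟩
  · ext g
    simp only [Set.mem_image, Set.mem_univ, iff_true]
    obtain ⟨t, ht, hβt⟩ := honto g
    exact ⟨t, ht, hβt⟩
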